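/- Let q ≥ 2 and let H be a subgroup of ℤ_q. Define W_H = {v ∈ ℝ^q : v̂(m) = 0 for all m ∉ H, and v̂(0) = 0}, where v̂ is the discrete Fourier transform on ℤ_q. Then for any p ∈ (1, ∞) and any v ∈ W_H with v_j ≥ −1 for all j, one has ((1/q) ∑_{j=0}^{q-1} |1 + v_j|^p)^{1/p} ≤ |H|^{(p−1)/p}. -/

import Mathlib

open Finset ZMod

/-- Sum of p-th powers is at most the p-th power of the sum, for nonneg reals and `p ≥ 1`. -/
lemma sum_rpow_le_rpow_sum {ι : Type*} [Fintype ι] (F : ι → ℝ) (hF : ∀ a, 0 ≤ F a)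
    {p : ℝ} (hp : 1 < p) : ∑ a, F a ^ p ≤ (∑ a, F a) ^ p := by
  set T := ∑ a, F a with hT
  have hT0 : 0 ≤ T := Finset.sum_nonneg fun a _ => hF a
  have hple : ∀ a, F a ^ p ≤ T ^ (p - 1) * F a := by
    intro a
    have h1 : F a ^ p = F a ^ (p - 1) * F a := by
      have := Real.rpow_add' (hF a) (show (p - 1) + 1 ≠ 0 by linarith)
      rw [show (p - 1) + 1 = p by ring, Real.rpow_one] at this
      exact this
    rw [h1]
    have : F a ^ (p - 1) ≤ T ^ (p - 1) :=
      Real.rpow_le_rpow (hF a) (Finset.single_le_sum (fun a _ => hF a) (mem_univ a))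
        (by linarith)
    exact mul_le_mul_of_nonneg_right this (hF a)
  calc ∑ a, F a ^ p ≤ ∑ a, T ^ (p - 1) * F a := Finset.sum_le_sum fun a _ => hple a
    _ = T ^ (p - 1) * T := by rw [← Finset.mul_sum]
    _ = T ^ p := by
        have := Real.rpow_add' hT0 (show (p - 1) + 1 ≠ 0 by linarith)
        rw [show (p - 1) + 1 = p by ring, Real.rpow_one] at this
        exact this.symm

/-- If `v ∈ ℝ^q` has DFT supported on a subgroup `H` of `ℤ_q`, vanishing at `0`, and
`v_j ≥ -1`, then `((1/q) ∑ |1+v_j|^p)^{1/p} ≤ |H|^{(p-1)/p}` for `p ∈ (1,∞)`. -/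
theorem stmt13 (q : ℕ) [NeZero q] (h2 : 2 ≤ q) (H : AddSubgroup (ZMod q)) (v : ZMod q → ℝ)
    (hsupp : ∀ m : ZMod q, m ∉ H →
      ∑ j : ZMod q, (v j : ℂ) *
        Complex.exp (-2 * Real.pi * Complex.I * ((m.val : ℂ) * (j.val : ℂ)) / q) = 0)
    (hzero : ∑ j : ZMod q, v j = 0)
    (p : ℝ) (hp : 1 < p) (hv : ∀ j, -1 ≤ v j) :
    ((1 / q) * ∑ j : ZMod q, |1 + v j| ^ p) ^ (1 / p) ≤
      (Nat.card H : ℝ) ^ ((p - 1) / p) := by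
  classical
  set w : ZMod q → ℂ := fun j => (v j : ℂ) with hw
  -- the DFT of w vanishes off H
  have hdft : ∀ m : ZMod q, m ∉ H → dft w m = 0 := by
    intro m hm
    rw [dft_apply]
    rw [← hsupp m hm]
    refine Finset.sum_congr rfl fun j _ => ?_
    have : (-(j * m) : ZMod q) = ((-(j.val * m.val : ℤ) : ℤ) : ZMod q) := by
      push_cast
      rw [ZMod.natCast_val, ZMod.natCast_val, ZMod.cast_id, ZMod.cast_id]
    rw [this, ZMod.stdAddChar_coe, smul_eq_mul, mul_comm]
    congr 1
    push_cast
    ring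
  -- the DFT of w vanishes at 0
  have hdft0 : dft w 0 = 0 := by
    rw [dft_apply_zero]
    rw [hw]
    simp only [← Complex.ofReal_sum, hzero, Complex.ofReal_zero]
  -- periodicity along multiples killed by all frequencies in the support
  have key : ∀ t : ZMod q, (∀ m : ZMod q, dft w m ≠ 0 → m * t = 0) →
      ∀ j, v (j + t) = v j := by
    intro t ht j
    have hinv : ∀ k, w k = (q : ℂ)⁻¹ • ∑ m : ZMod q, stdAddChar (m * k) • dft w m := by
      intro k
      conv_lhs => rw [← (dft (N := q)).symm_apply_apply w]
      rw [invDFT_apply]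
    have hsum : ∑ m : ZMod q, stdAddChar (m * (j + t)) • dft w m
        = ∑ m : ZMod q, stdAddChar (m * j) • dft w m := by
      refine Finset.sum_congr rfl fun m _ => ?_
      by_cases hm : dft w m = 0
      · rw [hm, smul_zero, smul_zero]
      · have : m * (j + t) = m * j := by rw [mul_add, ht m hm, add_zero]
        rw [this]
    have := (hinv (j + t)).trans (by rw [hsum, ← hinv j])
    exact_mod_cast congrArg Complex.re this
  set h := Nat.card H with hhdef
  have hHdvd : h ∣ q := by
    have := AddSubgroup.card_addSubgroup_dvd_card H
    rwa [Nat.card_zmod] at this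
  have hhpos : 0 < h := Nat.card_pos
  set nK := q / h with hnK
  have hq : h * nK = q := Nat.mul_div_cancel' hHdvd
  have hnKpos : 0 < nK := by
    rcases Nat.eq_zero_or_pos nK with h0 | h0
    · rw [h0, Nat.mul_zero] at hq; omega
    · exact h0
  -- v is invariant under adding h * b for any b
  have hperiod : ∀ (b : ZMod q) (j : ZMod q), v (j + (h : ZMod q) * b) = v j := by
    intro b j
    refine key ((h : ZMod q) * b) (fun m hm => ?_) j
    have hmem : m ∈ H := by by_contra hc; exact hm (hdft m hc)
    have hzero' : (h : ZMod q) * m = 0 := by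
      have : (h • (⟨m, hmem⟩ : H) : H) = 0 := card_nsmul_eq_zero'
      have := congrArg (AddSubgroup.subtype H) this
      simpa [nsmul_eq_mul] using this
    calc m * ((h : ZMod q) * b) = ((h : ZMod q) * m) * b := by ring
    _ = 0 := by rw [hzero', zero_mul]
  -- the equivalence Fin h × Fin nK ≃ ZMod q
  have hcards : Fintype.card (Fin h × Fin nK) = Fintype.card (ZMod q) := by
    rw [Fintype.card_prod, Fintype.card_fin, Fintype.card_fin, ZMod.card, hq]
  have hinj : Function.Injective
      (fun ab : Fin h × Fin nK => ((ab.1.1 + h * ab.2.1 : ℕ) : ZMod q)) := by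
    rintro ⟨a1, b1⟩ ⟨a2, b2⟩ hE
    simp only at hE
    have hlt : ∀ (a : Fin h) (b : Fin nK), a.1 + h * b.1 < q := by
      rintro a b
      calc a.1 + h * b.1 < h + h * b.1 := by omega
        _ = h * (b.1 + 1) := by ring
        _ ≤ h * nK := Nat.mul_le_mul_left h b.2
        _ = q := hq
    have : a1.1 + h * b1.1 = a2.1 + h * b2.1 := by
      have := congrArg ZMod.val hE
      rwa [ZMod.val_natCast_of_lt (hlt a1 b1), ZMod.val_natCast_of_lt (hlt a2 b2)] at this
    have ha : a1.1 = a2.1 := by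
      have h1 : (a1.1 + h * b1.1) % h = a1.1 % h := by simp [Nat.add_mul_mod_self_left]
      have h2 : (a2.1 + h * b2.1) % h = a2.1 % h := by simp [Nat.add_mul_mod_self_left]
      have := h1 ▸ h2 ▸ congrArg (· % h) this
      rwa [Nat.mod_eq_of_lt a1.2, Nat.mod_eq_of_lt a2.2] at this
    have hb : b1.1 = b2.1 := by
      have : h * b1.1 = h * b2.1 := by omega
      exact Nat.eq_of_mul_eq_mul_left hhpos this
    exact Prod.ext (Fin.ext ha) (Fin.ext hb)
  let e : Fin h × Fin nK ≃ ZMod q :=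
    Equiv.ofBijective _ ((Fintype.bijective_iff_injective_and_card _).mpr ⟨hinj, hcards⟩)
  have he : ∀ ab : Fin h × Fin nK, e ab = ((ab.1.1 + h * ab.2.1 : ℕ) : ZMod q) := fun _ => rfl
  -- value of v along the equivalence depends only on first coordinate
  have hval : ∀ ab : Fin h × Fin nK, v (e ab) = v ((ab.1.1 : ℕ) : ZMod q) := by
    rintro ⟨a, b⟩
    rw [he]
    have : ((a.1 + h * b.1 : ℕ) : ZMod q) = ((a.1 : ℕ) : ZMod q) + (h : ZMod q) * (b.1 : ℕ) := by
      push_cast; ring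
    rw [this, hperiod]
  have habs : ∀ j, |1 + v j| = 1 + v j := fun j => abs_of_nonneg (by linarith [hv j])
  set F : Fin h → ℝ := fun a => 1 + v ((a.1 : ℕ) : ZMod q) with hF
  have hF0 : ∀ a, 0 ≤ F a := fun a => by have := hv ((a.1 : ℕ) : ZMod q); simp only [hF]; linarith
  have hvalF : ∀ (a : Fin h) (b : Fin nK), 1 + v (e (a, b)) = F a := fun a b => by
    rw [hval ⟨a, b⟩]
  -- sum of F equals h
  have hsumF : ∑ a : Fin h, F a = h := by
    have h1 : ∑ j : ZMod q, (1 + v j) = q := by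
      rw [Finset.sum_add_distrib, hzero, add_zero, Finset.sum_const, Finset.card_univ, ZMod.card]
      simp
    have h2 : ∑ j : ZMod q, (1 + v j) = ∑ ab : Fin h × Fin nK, (1 + v (e ab)) :=
      (Equiv.sum_comp e _).symm
    rw [h2] at h1
    have h3 : ∑ ab : Fin h × Fin nK, (1 + v (e ab)) = (nK : ℝ) * ∑ a : Fin h, F a := by
      rw [Fintype.sum_prod_type, Finset.mul_sum]
      refine Finset.sum_congr rfl fun a _ => ?_
      rw [Finset.sum_congr rfl fun b _ => hvalF a b, Finset.sum_const, Finset.card_univ,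
        Fintype.card_fin, nsmul_eq_mul]
    rw [h3] at h1
    have hnK0 : (nK : ℝ) ≠ 0 := Nat.cast_ne_zero.mpr hnKpos.ne'
    have : (nK : ℝ) * ∑ a : Fin h, F a = (nK : ℝ) * h := by
      rw [h1]; push_cast [← hq]; ring
    exact mul_left_cancel₀ hnK0 this
  -- sum of p-th powers over ZMod q
  have hsump : ∑ j : ZMod q, |1 + v j| ^ p = (nK : ℝ) * ∑ a : Fin h, F a ^ p := by
    rw [show ∑ j : ZMod q, |1 + v j| ^ p = ∑ j : ZMod q, (1 + v j) ^ p from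
      Finset.sum_congr rfl fun j _ => by rw [habs]]
    rw [← Equiv.sum_comp e fun j => (1 + v j) ^ p, Fintype.sum_prod_type, Finset.mul_sum]
    refine Finset.sum_congr rfl fun a _ => ?_
    rw [Finset.sum_congr rfl fun b _ => by rw [hvalF a b], Finset.sum_const, Finset.card_univ,
      Fintype.card_fin, nsmul_eq_mul]
  -- main bound before taking p-th roots
  have hmain : (1 / q : ℝ) * ∑ j : ZMod q, |1 + v j| ^ p ≤ (h : ℝ) ^ (p - 1) := by
    rw [hsump]
    have hb : ∑ a : Fin h, F a ^ p ≤ (h : ℝ) ^ p := by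
      have := sum_rpow_le_rpow_sum F hF0 hp
      rwa [hsumF] at this
    have hqpos : (0 < (q:ℝ)) := by positivity
    have hcalc : (1 / q : ℝ) * ((nK : ℝ) * ((h:ℝ) ^ p)) = (h : ℝ) ^ (p - 1) := by
      have hq' : (q : ℝ) = (h : ℝ) * nK := by exact_mod_cast hq.symm
      rw [hq']
      have hhr : (0:ℝ) < h := by exact_mod_cast hhpos
      have hnr : (0:ℝ) < nK := by exact_mod_cast hnKpos
      have hsplit : (h:ℝ) ^ p = (h:ℝ) ^ (p-1) * (h:ℝ) := by
        have := Real.rpow_add' (le_of_lt hhr) (show (p - 1) + 1 ≠ 0 by linarith)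
        rw [show (p - 1) + 1 = p by ring, Real.rpow_one] at this
        exact this
      rw [hsplit]
      field_simp
    calc (1 / q : ℝ) * ((nK:ℝ) * ∑ a : Fin h, F a ^ p)
        ≤ (1 / q : ℝ) * ((nK : ℝ) * ((h:ℝ) ^ p)) := by
          apply mul_le_mul_of_nonneg_left _ (by positivity)
          exact mul_le_mul_of_nonneg_left hb (by positivity)
      _ = (h : ℝ) ^ (p - 1) := hcalc
  -- take p-th roots
  have hpinv : (0:ℝ) ≤ 1 / p := by positivity
  have hLHS0 : (0:ℝ) ≤ (1 / q : ℝ) * ∑ j : ZMod q, |1 + v j| ^ p := by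
    apply mul_nonneg (by positivity)
    exact Finset.sum_nonneg fun j _ => Real.rpow_nonneg (abs_nonneg _) p
  calc ((1 / q : ℝ) * ∑ j : ZMod q, |1 + v j| ^ p) ^ (1 / p)
      ≤ ((h : ℝ) ^ (p - 1)) ^ (1 / p) := Real.rpow_le_rpow hLHS0 hmain hpinv
    _ = (h : ℝ) ^ ((p - 1) / p) := by
        rw [← Real.rpow_mul (by positivity)]
        ring_nf
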